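/- For any compact Hausdorff space K the following conditions are equivalent: (i) K is ω-Corson; (ii) the Alexandroff duplicate AD(K) is ω-Corson; (iii) the Alexandroff duplicate AD(K) is ω-Valdivia. -/

import Mathlib

open Topology Set

universe u v

/-- A space is *M-scattered* if every nonempty subspace contains a nonempty
relatively open second-countable subset. -/
def MScattered (X : Type*) [TopologicalSpace X] : Prop :=
  ∀ A : Set X, A.Nonempty → ∃ U : Set X, IsOpen U ∧ (A ∩ U).Nonempty ∧
    SecondCountableTopology ↥(A ∩ U)

/-- Corson compact: embeds into the Σ-product of copies of `[0,1]`. -/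
def CorsonCompact (K : Type u) [TopologicalSpace K] : Prop :=
  ∃ (Γ : Type u) (f : K → Γ → unitInterval),
    Topology.IsEmbedding f ∧ ∀ k, {γ | f k γ ≠ 0}.Countable

/-- Eberlein compact: embeds into `c₀(Γ)`. -/
def EberleinCompact (K : Type u) [TopologicalSpace K] : Prop :=
  ∃ (Γ : Type u) (f : K → Γ → unitInterval),
    Topology.IsEmbedding f ∧ ∀ k, ∀ ε : ℝ, 0 < ε → {γ | ε < (f k γ : ℝ)}.Finite

/-- NY compact: embeds into a σ-product of compact metrizable spaces. -/
def NYCompact (K : Type u) [TopologicalSpace K] : Prop :=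
  ∃ (Γ : Type u) (X : Γ → Type u) (t : ∀ γ, TopologicalSpace (X γ)),
    (∀ γ, @CompactSpace (X γ) (t γ)) ∧
    (∀ γ, @TopologicalSpace.MetrizableSpace (X γ) (t γ)) ∧
    ∃ (a : ∀ γ, X γ) (f : K → ∀ γ, X γ),
      @Topology.IsEmbedding K (∀ γ, X γ) _ (@Pi.topologicalSpace Γ X t) f ∧
      ∀ k, {γ | f k γ ≠ a γ}.Finite

/-- ω-Corson compact: embeds into the σ-product of copies of `[0,1]`. -/
def OmegaCorson (K : Type u) [TopologicalSpace K] : Prop :=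
  ∃ (Γ : Type u) (f : K → Γ → unitInterval),
    Topology.IsEmbedding f ∧ ∀ k, {γ | f k γ ≠ 0}.Finite

/-- Semi-Eberlein: embeds into `[0,1]^Γ` with `h(K) ∩ c₀(Γ)` dense in `h(K)`. -/
def SemiEberlein (K : Type u) [TopologicalSpace K] : Prop :=
  ∃ (Γ : Type u) (h : K → Γ → unitInterval), Topology.IsEmbedding h ∧
    Set.range h ⊆
      closure (Set.range h ∩ {x | ∀ ε : ℝ, 0 < ε → {γ | ε < (x γ : ℝ)}.Finite})

/-- ω-Valdivia: embeds into `[0,1]^Γ` with `h(K) ∩ σ([0,1]^Γ)` dense in `h(K)`. -/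
def OmegaValdivia (K : Type u) [TopologicalSpace K] : Prop :=
  ∃ (Γ : Type u) (h : K → Γ → unitInterval), Topology.IsEmbedding h ∧
    Set.range h ⊆ closure (Set.range h ∩ {x | {γ | x γ ≠ 0}.Finite})

/-- NY-Valdivia: embeds into a product of Hilbert cubes with the σ-product trace dense. -/
def NYValdivia (K : Type u) [TopologicalSpace K] : Prop :=
  ∃ (Γ : Type u) (h : K → Γ → ℕ → unitInterval), Topology.IsEmbedding h ∧
    Set.range h ⊆ closure (Set.range h ∩ {x | {γ | x γ ≠ 0}.Finite})

/-- The topology of the Alexandroff duplicate on `X × Bool`: points `(x, true)` are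
isolated, and basic neighborhoods of `(x, false)` are `(U × Bool) \ {(x, true)}`. -/
def adTopology (X : Type*) [TopologicalSpace X] : TopologicalSpace (X × Bool) where
  IsOpen V := ∀ x : X, (x, false) ∈ V →
    ∃ U : Set X, IsOpen U ∧ x ∈ U ∧ {p : X × Bool | p.1 ∈ U ∧ p ≠ (x, true)} ⊆ V
  isOpen_univ := fun x _ => ⟨Set.univ, isOpen_univ, trivial, fun _ _ => trivial⟩
  isOpen_inter := by
    intro V W hV hW x hx
    obtain ⟨U1, hU1, hx1, hs1⟩ := hV x hx.1
    obtain ⟨U2, hU2, hx2, hs2⟩ := hW x hx.2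
    exact ⟨U1 ∩ U2, hU1.inter hU2, ⟨hx1, hx2⟩,
      fun p hp => ⟨hs1 ⟨hp.1.1, hp.2⟩, hs2 ⟨hp.1.2, hp.2⟩⟩⟩
  isOpen_sUnion := by
    intro S hS x hx
    obtain ⟨V, hVS, hxV⟩ := hx
    obtain ⟨U, hU, hxU, hsub⟩ := hS V hVS x hxV
    exact ⟨U, hU, hxU, fun p hp => ⟨V, hVS, hsub hp⟩⟩

/-- A space is metalindelöf if every open cover has a point-countable open refinement. -/
def Metalindelof (X : Type*) [TopologicalSpace X] : Prop :=
  ∀ 𝒰 : Set (Set X), (∀ U ∈ 𝒰, IsOpen U) → ⋃₀ 𝒰 = Set.univ →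
    ∃ 𝒱 : Set (Set X), (∀ V ∈ 𝒱, IsOpen V) ∧ ⋃₀ 𝒱 = Set.univ ∧
      (∀ V ∈ 𝒱, ∃ U ∈ 𝒰, V ⊆ U) ∧ ∀ x : X, {V ∈ 𝒱 | x ∈ V}.Countable

/-- Hereditarily metalindelöf: every subspace is metalindelöf. -/
def HereditarilyMetalindelof (X : Type*) [TopologicalSpace X] : Prop :=
  ∀ A : Set X, Metalindelof ↥A

noncomputable section

/-- Tent function at dyadic scale `n`: supported on `(2^{-n-1}, 2^{-n+1})`, peak `1` at `2^{-n}`. -/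
def tent (n : ℕ) (t : ℝ) : ℝ := max 0 (min (2 ^ (n + 1) * t - 1) (2 - 2 ^ n * t))

/-- Wide bump at scale `n`: positive exactly on `(2^{-n-4}, 2^{-n+5})`,
equal `1` on `[2^{-n-3}, 2^{-n+3}]`. -/
def wbump (n : ℕ) (t : ℝ) : ℝ :=
  max 0 (min 1 (min (2 ^ (n + 4) * t - 1) (2 - 2 ^ n * t / 16)))

theorem tent_continuous (n : ℕ) : Continuous (tent n) := by
  unfold tent; fun_prop

theorem wbump_continuous (n : ℕ) : Continuous (wbump n) := by
  unfold wbump; fun_prop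

theorem tent_nonneg (n : ℕ) (t : ℝ) : 0 ≤ tent n t := le_max_left _ _

theorem wbump_nonneg (n : ℕ) (t : ℝ) : 0 ≤ wbump n t := le_max_left _ _

theorem tent_le_one (n : ℕ) (t : ℝ) : tent n t ≤ 1 := by
  unfold tent
  rcases le_or_gt (2 ^ (n + 1) * t - 1) (2 - 2 ^ n * t) with h | h
  · rw [min_eq_left h]
    rcases le_or_gt (2 ^ (n + 1) * t - 1) 0 with h' | h'
    · simpa [max_eq_left h']
    · rw [max_eq_right h'.le]
      -- a + 2b = 3 with a := 2^{n+1} t - 1, b := 2 - 2^n t; a ≤ b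
      have hpt : (2:ℝ) ^ (n+1) * t = 2 * (2 ^ n * t) := by ring
      linarith
  · rw [min_eq_right h.le]
    rcases le_or_gt (2 - 2 ^ n * t) 0 with h' | h'
    · simpa [max_eq_left h']
    · rw [max_eq_right h'.le]
      have hpt : (2:ℝ) ^ (n+1) * t = 2 * (2 ^ n * t) := by ring
      linarith

theorem wbump_le_one (n : ℕ) (t : ℝ) : wbump n t ≤ 1 := by
  unfold wbump
  rcases le_or_gt (min 1 (min (2 ^ (n + 4) * t - 1) (2 - 2 ^ n * t / 16))) 0 with h | h
  · simpa [max_eq_left h]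
  · rw [max_eq_right h.le]
    exact min_le_left _ _

theorem tent_pos_iff (n : ℕ) (t : ℝ) :
    0 < tent n t ↔ 1 < 2 ^ (n + 1) * t ∧ 2 ^ n * t < 2 := by
  unfold tent
  rw [lt_max_iff]
  constructor
  · rintro (h | h)
    · exact absurd h (lt_irrefl 0)
    · rw [lt_min_iff] at h
      constructor <;> linarith [h.1, h.2]
  · rintro ⟨h1, h2⟩
    right
    rw [lt_min_iff]
    constructor <;> linarith

theorem wbump_pos_iff (n : ℕ) (t : ℝ) :
    0 < wbump n t ↔ 1 < 2 ^ (n + 4) * t ∧ 2 ^ n * t < 32 := by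
  unfold wbump
  rw [lt_max_iff]
  constructor
  · rintro (h | h)
    · exact absurd h (lt_irrefl 0)
    · rw [lt_min_iff, lt_min_iff] at h
      constructor <;> linarith [h.2.1, h.2.2]
  · rintro ⟨h1, h2⟩
    right
    rw [lt_min_iff, lt_min_iff]
    refine ⟨one_pos, by linarith, by linarith⟩

/-- on the plateau the wide bump is positive (this is all we need) -/
theorem wbump_pos_of_window (n : ℕ) (t : ℝ) (h1 : 1 ≤ 2 ^ (n + 3) * t)
    (h2 : 2 ^ n * t ≤ 8) : 0 < wbump n t := by
  rw [wbump_pos_iff]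
  have : (2:ℝ) ^ (n + 4) = 2 * 2 ^ (n+3) := by ring
  constructor
  · rw [this]; nlinarith
  · linarith

/-- finitely many active tents at any point -/
theorem tent_support_finite (t : ℝ) : {n : ℕ | tent n t ≠ 0}.Finite := by
  rcases le_or_gt t 0 with ht | ht
  · convert Set.finite_empty
    ext n
    simp only [Set.mem_setOf_eq, Set.mem_empty_iff_false, iff_false, not_not]
    have h1 : 2 ^ (n+1) * t - 1 ≤ 0 := by nlinarith [pow_pos (by norm_num : (0:ℝ) < 2) (n+1)]
    unfold tent
    rw [max_eq_left]
    exact le_trans (min_le_left _ _) h1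
  · obtain ⟨M, hM⟩ := pow_unbounded_of_one_lt (2 / t) (by norm_num : (1:ℝ) < 2)
    apply Set.Finite.subset (Set.finite_Iio M)
    intro n hn
    simp only [Set.mem_setOf_eq] at hn
    have hpos : 0 < tent n t := lt_of_le_of_ne (tent_nonneg n t) (Ne.symm hn)
    rw [tent_pos_iff] at hpos
    simp only [Set.mem_Iio]
    by_contra hc
    push_neg at hc
    have : (2:ℝ) ^ M ≤ 2 ^ n := pow_le_pow_right₀ (by norm_num) hc
    have h2 : (2:ℝ) ^ n * t < 2 := hpos.2
    have : (2:ℝ) / t < 2 ^ n := lt_of_lt_of_le hM this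
    rw [div_lt_iff₀ ht] at this
    nlinarith

theorem wbump_support_finite {t : ℝ} (ht : 0 < t) : {n : ℕ | wbump n t ≠ 0}.Finite := by
  obtain ⟨M, hM⟩ := pow_unbounded_of_one_lt (32 / t) (by norm_num : (1:ℝ) < 2)
  apply Set.Finite.subset (Set.finite_Iio M)
  intro n hn
  simp only [Set.mem_setOf_eq] at hn
  have hpos : 0 < wbump n t := lt_of_le_of_ne (wbump_nonneg n t) (Ne.symm hn)
  rw [wbump_pos_iff] at hpos
  simp only [Set.mem_Iio]
  by_contra hc
  push_neg at hc
  have h1 : (2:ℝ) ^ M ≤ 2 ^ n := pow_le_pow_right₀ (by norm_num) hc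
  have : (32:ℝ) / t < 2 ^ n := lt_of_lt_of_le hM h1
  rw [div_lt_iff₀ ht] at this
  nlinarith [hpos.2]

theorem exists_window {t : ℝ} (h0 : 0 < t) (h1 : t ≤ 1) :
    ∃ n : ℕ, 1 ≤ 2 ^ (n + 1) * t ∧ 2 ^ n * t ≤ 1 := by
  classical
  have hex : ∃ n : ℕ, 1 ≤ 2 ^ (n + 1) * t := by
    obtain ⟨k, hk⟩ := pow_unbounded_of_one_lt (1 / t) (by norm_num : (1:ℝ) < 2)
    rw [div_lt_iff₀ h0] at hk
    refine ⟨k, ?_⟩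
    have hmono : (2:ℝ) ^ k ≤ 2 ^ (k + 1) := by
      apply pow_le_pow_right₀ (by norm_num)
      omega
    nlinarith
  refine ⟨Nat.find hex, Nat.find_spec hex, ?_⟩
  rcases hn : Nat.find hex with _ | m
  · simpa using h1
  · have := Nat.find_min hex (by omega : m < Nat.find hex)
    push_neg at this
    rw [hn] at *
    linarith

theorem tent_window_val {n : ℕ} {t : ℝ} (h : 1 ≤ 2 ^ (n + 1) * t) (h' : 2 ^ n * t ≤ 1) :
    tent n t = 2 ^ (n + 1) * t - 1 ∧ tent (n + 1) t = 2 - 2 ^ (n + 1) * t := by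
  have e1 : (2:ℝ) ^ (n + 1) * t = 2 * (2 ^ n * t) := by ring
  have e2 : (2:ℝ) ^ (n + 1 + 1) * t = 2 * (2 ^ (n + 1) * t) := by ring
  constructor
  · unfold tent
    rw [min_eq_left (by linarith), max_eq_right (by linarith)]
  · unfold tent
    rw [min_eq_right (by linarith), max_eq_right (by linarith)]

theorem tent_eq_one {n : ℕ} {t : ℝ} (h : tent n t = 1) : 2 ^ n * t = 1 := by
  unfold tent at h
  have e1 : (2:ℝ) ^ (n + 1) * t = 2 * (2 ^ n * t) := by ring
  rcases max_cases (0:ℝ) (min (2 ^ (n + 1) * t - 1) (2 - 2 ^ n * t)) with ⟨he, _⟩ | ⟨he, _⟩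
  · rw [he] at h; norm_num at h
  · rw [he] at h
    have := le_min_iff.mp h.ge
    have h1 := this.1
    have h2 := this.2
    linarith

/-- The tent system separates points of `[0,1]`. -/
theorem tent_inj {t t' : ℝ} (h0 : 0 ≤ t) (h1 : t ≤ 1) (h0' : 0 ≤ t') (h1' : t' ≤ 1)
    (h : ∀ n, tent n t = tent n t') : t = t' := by
  have key : ∀ u u' : ℝ, 0 < u → u ≤ 1 → u' ≤ 1 → (∀ n, tent n u = tent n u') → u = u' := by
    intro u u' hu hu1 hu1' heq
    obtain ⟨n, hw1, hw2⟩ := exists_window hu hu1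
    obtain ⟨hv, hv'⟩ := tent_window_val hw1 hw2
    have e1 : (2:ℝ) ^ (n + 1) * u = 2 * (2 ^ n * u) := by ring
    have e1' : (2:ℝ) ^ (n + 1) * u' = 2 * (2 ^ n * u') := by ring
    have hp : (0:ℝ) < 2 ^ (n + 1) := pow_pos (by norm_num) _
    rcases lt_or_eq_of_le (show 2 ^ (n + 1) * u - 1 ≤ 1 by linarith) with hlt | he1
    · -- v < 1 : use tent (n+1)
      have h2 : 0 < tent (n + 1) u' := by
        rw [← heq, hv']; linarith
      rw [tent_pos_iff] at h2
      have e2' : (2:ℝ) ^ (n + 1 + 1) * u' = 2 * (2 ^ (n + 1) * u') := by ring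
      have hb : 2 ^ n * u' ≤ 1 := by linarith [h2.2]
      -- compute tent n u'
      have htn' : tent n u' = max 0 (2 ^ (n + 1) * u' - 1) := by
        unfold tent
        rw [min_eq_left (by linarith)]
      have hvv : tent n u' = 2 ^ (n + 1) * u - 1 := by rw [← heq, hv]
      rcases lt_or_eq_of_le (show 0 ≤ 2 ^ (n + 1) * u - 1 by linarith) with hpos | hzero
      · -- v > 0
        have : max 0 (2 ^ (n + 1) * u' - 1) = 2 ^ (n + 1) * u - 1 := by
          rw [← htn', hvv]
        rcases max_cases (0:ℝ) (2 ^ (n + 1) * u' - 1) with ⟨hc, _⟩ | ⟨hc, _⟩ <;>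
          rw [hc] at this
        · linarith
        · have : (2:ℝ) ^ (n + 1) * u' = 2 ^ (n + 1) * u := by linarith
          exact (mul_left_cancel₀ (ne_of_gt hp) this).symm
      · -- v = 0 : tent (n+1) u' = 1
        have hone : tent (n + 1) u' = 1 := by
          rw [← heq, hv']; linarith
        have := tent_eq_one hone
        have hu'eq : (2:ℝ) ^ (n + 1) * u' = 1 := this
        have hueq : (2:ℝ) ^ (n + 1) * u = 1 := by linarith
        exact mul_left_cancel₀ (ne_of_gt hp) (by linarith)
    · -- v = 1 : tent n u' = 1
      have hone : tent n u' = 1 := by rw [← heq, hv]; linarith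
      have := tent_eq_one hone
      have hpn : (0:ℝ) < 2 ^ n := pow_pos (by norm_num) _
      have : (2:ℝ) ^ n * u = 2 ^ n * u' := by linarith
      exact mul_left_cancel₀ (ne_of_gt hpn) this
  rcases eq_or_lt_of_le h0 with he | hpos
  · rcases eq_or_lt_of_le h0' with he' | hpos'
    · rw [← he, ← he']
    · exact absurd (key t' t hpos' h1' h1 (fun n => (h n).symm)) (by rw [← he]; exact ne_of_gt hpos')
  · exact key t t' hpos h1 h1' h

/-- covering lemma: a point in the support of `wbump n` lies in the "X-window"
`[2^{-k-3}, 2^{-k+3}]` for `k = n+1` or `k = n-2`. -/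
theorem wbump_cover {n : ℕ} {v : ℝ} (hv : 0 < v) (hv1 : v ≤ 1)
    (h1 : 1 < 2 ^ (n + 4) * v) (h2 : 2 ^ n * v < 32) :
    (1 ≤ 2 ^ ((n + 1) + 3) * v ∧ 2 ^ (n + 1) * v ≤ 8) ∨
    (1 ≤ 2 ^ ((n - 2) + 3) * v ∧ 2 ^ (n - 2) * v ≤ 8) := by
  have e1 : (2:ℝ) ^ (n + 1) * v = 2 * (2 ^ n * v) := by ring
  have e4 : (2:ℝ) ^ (n + 4) * v = 16 * (2 ^ n * v) := by ring
  rcases le_or_gt (2 ^ n * v) 4 with hc | hc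
  · left
    constructor
    · have : ((n:ℕ) + 1) + 3 = n + 4 := by omega
      rw [this]; linarith
    · linarith
  · right
    have hn2 : 2 ≤ n := by
      by_contra hn
      push_neg at hn
      interval_cases n <;> nlinarith
    have he : n - 2 + 3 = n + 1 := by omega
    have he2 : n = (n - 2) + 2 := by omega
    have epow : (2:ℝ) ^ n = 2 ^ (n - 2) * 4 := by
      rw [he2, pow_add]; norm_num
    constructor
    · rw [he]; linarith
    · nlinarith [epow]

end


section ADlemmas

variable {X : Type v} [TopologicalSpace X]

theorem adIsOpen_iff {V : Set (X × Bool)} :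
    IsOpen[adTopology X] V ↔ ∀ x : X, (x, false) ∈ V →
      ∃ U : Set X, IsOpen U ∧ x ∈ U ∧ {p : X × Bool | p.1 ∈ U ∧ p ≠ (x, true)} ⊆ V :=
  Iff.rfl

theorem adOpen_trues {V : Set (X × Bool)} (hV : ∀ p ∈ V, p.2 = true) :
    IsOpen[adTopology X] V := by
  intro x hx
  exact absurd (hV _ hx) (by simp)

theorem adContinuous_fst : Continuous[adTopology X, _] Prod.fst := by
  rw [@continuous_def]
  intro U hU
  intro x hx
  exact ⟨U, hU, hx, fun p hp => hp.1⟩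

theorem adContinuous_false : Continuous[_, adTopology X] (fun x => (x, false)) := by
  rw [@continuous_def]
  intro V hV
  rw [isOpen_iff_mem_nhds]
  intro x hx
  obtain ⟨U, hU, hxU, hsub⟩ := hV x hx
  filter_upwards [hU.mem_nhds hxU] with y hy
  exact hsub ⟨hy, by simp⟩

theorem adEmbedding_false :
    @Topology.IsEmbedding X (X × Bool) _ (adTopology X) (fun x => (x, false)) := by
  letI := adTopology X
  refine ⟨IsInducing.of_comp adContinuous_false adContinuous_fst ?_, ?_⟩
  · exact (IsInducing.id : IsInducing ((Prod.fst) ∘ (fun x : X => (x, false))))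
  · intro a b h
    simpa using h

theorem adCompactSpace [CompactSpace X] : @CompactSpace (X × Bool) (adTopology X) := by
  letI := adTopology X
  constructor
  rw [isCompact_iff_finite_subcover]
  intro ι W hW hcover
  classical
  -- choose for each x an index covering (x, false), and a basic neighborhood
  have h1 : ∀ x : X, ∃ i : ι, (x, false) ∈ W i := by
    intro x
    simpa using hcover (mem_univ ((x, false)))
  choose i hi using h1
  have h2 : ∀ x : X, ∃ U : Set X, IsOpen U ∧ x ∈ U ∧
      {p : X × Bool | p.1 ∈ U ∧ p ≠ (x, true)} ⊆ W (i x) := fun x => hW (i x) x (hi x)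
  choose U hUopen hUmem hUsub using h2
  have h3 : ∀ x : X, ∃ j : ι, (x, true) ∈ W j := by
    intro x
    simpa using hcover (mem_univ ((x, true)))
  choose j hj using h3
  obtain ⟨t, ht⟩ := (isCompact_iff_finite_subcover.mp isCompact_univ) U hUopen
    (fun x _ => mem_iUnion.mpr ⟨x, hUmem x⟩)
  refine ⟨t.image i ∪ t.image j, fun p _ => ?_⟩
  obtain ⟨x, hxt, hxU⟩ : ∃ x ∈ t, p.1 ∈ U x := by
    simpa using ht (mem_univ p.1)
  by_cases hp : p = (x, true)
  · refine mem_iUnion₂.mpr ⟨j x, ?_, ?_⟩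
    · exact Finset.mem_union_right _ (Finset.mem_image_of_mem j hxt)
    · rw [hp]; exact hj x
  · refine mem_iUnion₂.mpr ⟨i x, ?_, hUsub x ⟨hxU, hp⟩⟩
    exact Finset.mem_union_left _ (Finset.mem_image_of_mem i hxt)

end ADlemmas


set_option linter.unusedSectionVars false
section Easy
variable (K : Type u) [TopologicalSpace K] [CompactSpace K] [T2Space K]

theorem unitInterval.one_ne_zero' : (1 : unitInterval) ≠ 0 := by
  intro h
  have := congrArg Subtype.val h
  norm_num at this

/-- (ii) → (i) -/
theorem omegaCorson_of_AD (h : @OmegaCorson (K × Bool) (adTopology K)) : OmegaCorson K := by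
  letI := adTopology K
  obtain ⟨Γ, g, hg, hfin⟩ := h
  exact ⟨Γ, fun x => g (x, false), hg.comp adEmbedding_false, fun x => hfin (x, false)⟩

/-- (ii) → (iii) -/
theorem omegaValdivia_of_omegaCorson_AD (h : @OmegaCorson (K × Bool) (adTopology K)) :
    @OmegaValdivia (K × Bool) (adTopology K) := by
  letI := adTopology K
  obtain ⟨Γ, g, hg, hfin⟩ := h
  refine ⟨Γ, g, hg, ?_⟩
  have : Set.range g ∩ {x | {γ | x γ ≠ 0}.Finite} = Set.range g := by
    apply Set.inter_eq_left.mpr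
    rintro _ ⟨p, rfl⟩
    exact hfin p
  rw [this]
  exact subset_closure

/-- (i) → (ii) -/
theorem omegaCorson_AD_of_omegaCorson (h : OmegaCorson K) :
    @OmegaCorson (K × Bool) (adTopology K) := by
  letI := adTopology K
  haveI : CompactSpace (K × Bool) := adCompactSpace
  obtain ⟨Γ, f, hf, hfin⟩ := h
  classical
  refine ⟨Γ ⊕ K, fun p => Sum.elim (fun γ => f p.1 γ) (fun k => if p = (k, true) then 1 else 0), ?_, ?_⟩
  · have gcont : Continuous (fun p : K × Bool =>
        (Sum.elim (fun γ => f p.1 γ) (fun k => if p = (k, true) then 1 else 0) :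
          Γ ⊕ K → unitInterval)) := by
      apply continuous_pi
      rintro (γ | k)
      · exact ((continuous_apply γ).comp hf.continuous).comp adContinuous_fst
      · -- indicator of the clopen point (k, true)
        rw [continuous_def]
        intro O hO
        by_cases h1 : (1 : unitInterval) ∈ O <;> by_cases h0 : (0 : unitInterval) ∈ O
        · have : (fun p : K × Bool => (Sum.elim (fun γ => f p.1 γ)
              (fun k' => if p = (k', true) then 1 else 0) : Γ ⊕ K → unitInterval) (Sum.inr k)) ⁻¹' O
              = Set.univ := by
            ext p; simp only [Set.mem_preimage, Set.mem_univ, iff_true, Sum.elim_inr]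
            split <;> assumption
          rw [this]; exact isOpen_univ
        · have : (fun p : K × Bool => (Sum.elim (fun γ => f p.1 γ)
              (fun k' => if p = (k', true) then 1 else 0) : Γ ⊕ K → unitInterval) (Sum.inr k)) ⁻¹' O
              = {(k, true)} := by
            ext p; simp only [Set.mem_preimage, Set.mem_singleton_iff, Sum.elim_inr]
            split <;> simp_all
          rw [this]
          intro x hx
          simp at hx
        · have : (fun p : K × Bool => (Sum.elim (fun γ => f p.1 γ)
              (fun k' => if p = (k', true) then 1 else 0) : Γ ⊕ K → unitInterval) (Sum.inr k)) ⁻¹' O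
              = {(k, true)}ᶜ := by
            ext p; simp only [Set.mem_preimage, Set.mem_compl_iff, Set.mem_singleton_iff,
              Sum.elim_inr]
            split <;> simp_all
          rw [this]
          intro x hx
          by_cases hxk : x = k
          · subst hxk
            exact ⟨Set.univ, isOpen_univ, trivial, fun p hp => hp.2⟩
          · refine ⟨{k}ᶜ, isOpen_compl_singleton, hxk, fun p hp => ?_⟩
            intro hpk
            rw [hpk] at hp
            exact hp.1 rfl
        · have : (fun p : K × Bool => (Sum.elim (fun γ => f p.1 γ)
              (fun k' => if p = (k', true) then 1 else 0) : Γ ⊕ K → unitInterval) (Sum.inr k)) ⁻¹' O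
              = ∅ := by
            ext p; simp only [Set.mem_preimage, Set.mem_empty_iff_false, iff_false, Sum.elim_inr]
            split <;> assumption
          rw [this]; exact isOpen_empty
    have ginj : Function.Injective (fun p : K × Bool =>
        (Sum.elim (fun γ => f p.1 γ) (fun k => if p = (k, true) then 1 else 0) :
          Γ ⊕ K → unitInterval)) := by
      intro p q hpq
      have h1 : p.1 = q.1 := by
        apply hf.injective
        funext γ
        exact congrFun hpq (Sum.inl γ)
      have h2 := congrFun hpq (Sum.inr p.1)
      simp only [Sum.elim_inr] at h2
      have h2' : (if p = (p.1, true) then (1:unitInterval) else 0) =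
          (if q = (p.1, true) then (1:unitInterval) else 0) := h2
      rcases p with ⟨x, bp⟩
      rcases q with ⟨y, bq⟩
      simp only at h1
      subst h1
      cases bp <;> cases bq
      · rfl
      · exfalso
        rw [if_neg (by simp), if_pos rfl] at h2'
        exact unitInterval.one_ne_zero' h2'.symm
      · exfalso
        rw [if_pos rfl, if_neg (by simp)] at h2'
        exact unitInterval.one_ne_zero' h2'
      · rfl
    exact (gcont.isClosedEmbedding ginj).isEmbedding
  · rintro ⟨x, b⟩
    apply Set.Finite.subset (Set.Finite.union ((hfin x).image Sum.inl)
      (Set.finite_singleton (Sum.inr x)))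
    rintro (γ | k) hγ
    · simp only [ne_eq, Set.mem_setOf_eq, Sum.elim_inl] at hγ
      exact Set.mem_union_left _ ⟨γ, hγ, rfl⟩
    · simp only [ne_eq, Set.mem_setOf_eq, Sum.elim_inr] at hγ
      have : (x, b) = (k, true) := by
        by_contra hc
        rw [if_neg hc] at hγ
        exact hγ rfl
      right
      simp [show k = x from (congrArg Prod.fst this).symm]

end Easy


noncomputable section

/-- The master construction: a compact Hausdorff space equipped with "ω-Valdivia duplicate
data" is ω-Corson. -/
theorem master_omegaCorson {K Γ : Type u} [TopologicalSpace K] [CompactSpace K] [T2Space K]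
    (f s : Γ → K → ℝ)
    (hf0 : ∀ γ w, 0 ≤ f γ w) (hf1 : ∀ γ w, f γ w ≤ 1)
    (hfc : ∀ γ, Continuous (f γ))
    (hfinj : ∀ x y : K, (∀ γ, f γ x = f γ y) → x = y)
    (hSfin : ∀ w : K, {γ | s γ w ≠ 0}.Finite)
    (hB : ∀ (z : K) (A : Finset Γ) (ε : ℝ), 0 < ε → ∃ V : Set K, IsOpen V ∧ z ∈ V ∧
        ∀ y ∈ V, (∀ γ ∈ A, |f γ y - f γ z| < ε) ∧ (y ≠ z → ∀ γ ∈ A, |s γ y - f γ z| < ε)) :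
    OmegaCorson K := by
  classical
  have two_pos : ∀ n : ℕ, (0:ℝ) < 2 ^ n := fun n => pow_pos (by norm_num) n
  -- ### E sets are finite
  have hEfin : ∀ (γ : Γ) (ε : ℝ), 0 < ε → {w : K | ε ≤ |s γ w - f γ w|}.Finite := by
    intro γ ε hε
    have hU : ∀ w : K, ∃ V : Set K, IsOpen V ∧ w ∈ V ∧
        {y : K | ε ≤ |s γ y - f γ y|} ∩ V ⊆ {w} := by
      intro w
      obtain ⟨V, hVo, hwV, hV⟩ := hB w {γ} (ε / 2) (by linarith)
      refine ⟨V, hVo, hwV, ?_⟩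
      rintro y ⟨hyE, hyV⟩
      simp only [mem_setOf_eq] at hyE
      by_contra hyw
      simp only [mem_singleton_iff] at hyw
      obtain ⟨hf', hs'⟩ := hV y hyV
      have h1 := hf' γ (Finset.mem_singleton_self γ)
      have h2 := hs' hyw γ (Finset.mem_singleton_self γ)
      have h3 : |s γ y - f γ y| ≤ |s γ y - f γ w| + |f γ w - f γ y| := abs_sub_le _ _ _
      rw [abs_sub_comm (f γ w) (f γ y)] at h3
      linarith
    choose V hVo hVmem hVsub using hU
    obtain ⟨t, ht⟩ := IsCompact.elim_finite_subcover isCompact_univ V hVo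
      (fun w _ => mem_iUnion.mpr ⟨w, hVmem w⟩)
    apply Set.Finite.subset t.finite_toSet
    intro y hy
    obtain ⟨w, hwt, hyV⟩ : ∃ w ∈ t, y ∈ V w := by simpa using ht (mem_univ y)
    have h4 := hVsub w ⟨hy, hyV⟩
    simp only [mem_singleton_iff] at h4
    exact h4 ▸ hwt
  -- ### X sets
  set Xs : Γ → ℕ → Set K := fun γ n =>
    {z | {γ' | f γ' z ≠ 0}.Infinite ∧ 1 ≤ 2 ^ (n + 3) * f γ z ∧
         2 ^ n * f γ z ≤ 8 ∧ 1 ≤ 2 ^ (n + 3) * |s γ z - f γ z|} with hXs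
  have hXfin : ∀ γ n, (Xs γ n).Finite := by
    intro γ n
    apply Set.Finite.subset (hEfin γ ((2 ^ (n + 3))⁻¹) (by positivity))
    intro z hz
    obtain ⟨-, -, -, h4⟩ := hz
    simp only [mem_setOf_eq]
    have h5 : (0:ℝ) < 2 ^ (n + 3) := two_pos _
    have h6 := mul_le_mul_of_nonneg_left h4 (inv_nonneg.mpr h5.le)
    have h7 : ((2:ℝ) ^ (n + 3))⁻¹ * (2 ^ (n + 3) * |s γ z - f γ z|) = |s γ z - f γ z| := by
      field_simp
    rw [h7, mul_one] at h6
    exact h6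
  set XF : Γ → ℕ → Finset K := fun γ n => (hXfin γ n).toFinset with hXFdef
  have hXF : ∀ γ n z, z ∈ XF γ n ↔ z ∈ Xs γ n := fun γ n z => (hXfin γ n).mem_toFinset
  set XX : Set K := {z | ∃ γ n, z ∈ Xs γ n} with hXX
  set Nn : K → ℕ := fun w => {γ | s γ w ≠ 0}.ncard with hNn
  have hNcard : ∀ (w : K) (A : Finset Γ), (∀ γ ∈ A, s γ w ≠ 0) → A.card ≤ Nn w := by
    intro w A hA
    have h1 : (A : Set Γ) ⊆ {γ | s γ w ≠ 0} := by
      intro γ hγ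
      exact hA γ (by simpa using hγ)
    calc A.card = (A : Set Γ).ncard := (Set.ncard_coe_finset A).symm
    _ ≤ Nn w := Set.ncard_le_ncard h1 (hSfin w)
  -- ### the level property of points with infinite support
  have hBprop : ∀ z : K, {γ' | f γ' z ≠ 0}.Infinite → ∀ m : ℕ, ∃ V : Set K,
      IsOpen V ∧ z ∈ V ∧ ∀ w ∈ V, w ≠ z → m < Nn w := by
    intro z hinf m
    obtain ⟨A, hAsub, hAcard⟩ := Set.Infinite.exists_subset_card_eq hinf (m + 1)
    have hApos : ∀ γ ∈ A, 0 < f γ z := by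
      intro γ hγ
      have h1 := hAsub hγ
      simp only [mem_setOf_eq] at h1
      exact lt_of_le_of_ne (hf0 γ z) (Ne.symm h1)
    have hAne : A.Nonempty := Finset.card_pos.mp (by omega)
    have hεpos : 0 < A.inf' hAne (fun γ => f γ z) := by
      rw [Finset.lt_inf'_iff]
      exact hApos
    obtain ⟨V, hVo, hzV, hV⟩ := hB z A (A.inf' hAne (fun γ => f γ z) / 2) (by linarith)
    refine ⟨V, hVo, hzV, ?_⟩
    intro w hwV hwz
    have hsub : ∀ γ ∈ A, s γ w ≠ 0 := by
      intro γ hγ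
      have h2 := (hV w hwV).2 hwz γ hγ
      have h3 : A.inf' hAne (fun γ => f γ z) ≤ f γ z := Finset.inf'_le _ hγ
      have h4 := (abs_lt.mp h2).1
      intro h0
      rw [h0] at h4
      linarith
    have := hNcard w A hsub
    omega
  -- ### clone-free detector functions
  have hKZex : ∀ z : K, ∃ φ : ℕ → K → ℝ,
      (∀ m, Continuous (φ m)) ∧
      (∀ m w, φ m w ≤ φ (m + 1) w) ∧
      (∀ m w, 0 ≤ φ m w ∧ φ m w ≤ 1) ∧
      (z ∈ XX →
        (∀ m, φ m z = 0) ∧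
        (∀ w, w ≠ z → ∃ M, ∀ m, M ≤ m → φ m w = 1) ∧
        (∀ w, (∀ m, φ m w = 0) → w = z)) := by
    intro z
    by_cases hz : z ∈ XX
    · -- z has infinite f-support
      have hinf : {γ' | f γ' z ≠ 0}.Infinite := by
        obtain ⟨γ, n, hzX⟩ := hz
        exact hzX.1
      -- construct a clone-free sequence of coordinates
      have hAex : ∃ a : ℕ → Γ, ∀ w, (∀ j, f (a j) w = f (a j) z) → w = z := by
        set e := hinf.natEmbedding with he
        set a0 : ℕ → Γ := fun j => (e j).1 with ha0
        have ha0inj : Function.Injective a0 := by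
          intro i j hij
          exact e.injective (Subtype.ext hij)
        have ha0mem : ∀ j, f (a0 j) z ≠ 0 := fun j => (e j).2
        have ha0pos : ∀ j, 0 < f (a0 j) z :=
          fun j => lt_of_le_of_ne (hf0 _ z) (Ne.symm (ha0mem j))
        set CL : Set K := {w | ∀ j, f (a0 j) w = f (a0 j) z} with hCL
        have hCLc : CL.Countable := by
          have hsub : CL ⊆ ⋃ j : ℕ, {w | f (a0 j) z ≤ |s (a0 j) w - f (a0 j) w|} := by
            intro w hw
            by_contra hc
            simp only [mem_iUnion, mem_setOf_eq, not_exists, not_le] at hc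
            have hns : ∀ j : ℕ, s (a0 j) w ≠ 0 := by
              intro j h0
              have h1 := hc j
              have h2 := hw j
              rw [h0, h2] at h1
              rw [abs_sub_comm, sub_zero] at h1
              rw [abs_of_pos (ha0pos j)] at h1
              exact lt_irrefl _ h1
            have : {γ | s γ w ≠ 0}.Infinite :=
              Set.infinite_of_injective_forall_mem ha0inj hns
            exact this (hSfin w)
          exact Set.Countable.mono hsub
            (countable_iUnion fun j => ((hEfin _ _ (ha0pos j)).countable))
        by_cases hne : (CL \ {z}).Nonempty
        · obtain ⟨q, hq⟩ := Set.Countable.exists_eq_range (hCLc.mono diff_subset) hne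
          have hsep : ∀ k : ℕ, ∃ γ, f γ (q k) ≠ f γ z := by
            intro k
            by_contra hc
            push_neg at hc
            have h1 : q k = z := hfinj (q k) z hc
            have h2 : q k ∈ CL \ {z} := by
              rw [hq]
              exact mem_range_self k
            exact h2.2 h1
          choose sep hsepp using hsep
          refine ⟨fun j => if j % 2 = 0 then a0 (j / 2) else sep (j / 2), ?_⟩
          intro w hw
          have hwCL : w ∈ CL := by
            intro j
            have hmod : (2 * j) % 2 = 0 := by omega
            have hdiv : (2 * j) / 2 = j := by omega
            have h5 : f (if 2 * j % 2 = 0 then a0 (2 * j / 2) else sep (2 * j / 2)) w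
                = f (if 2 * j % 2 = 0 then a0 (2 * j / 2) else sep (2 * j / 2)) z := hw (2 * j)
            rw [if_pos hmod, hdiv] at h5
            exact h5
          rcases eq_or_ne w z with h | h
          · exact h
          · have hwd : w ∈ CL \ {z} := ⟨hwCL, h⟩
            rw [hq] at hwd
            obtain ⟨k, hk⟩ := hwd
            have hmod : ¬(2 * k + 1) % 2 = 0 := by omega
            have hdiv : (2 * k + 1) / 2 = k := by omega
            have h6 : f (if (2 * k + 1) % 2 = 0 then a0 ((2 * k + 1) / 2)
                  else sep ((2 * k + 1) / 2)) w
                = f (if (2 * k + 1) % 2 = 0 then a0 ((2 * k + 1) / 2)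
                  else sep ((2 * k + 1) / 2)) z := hw (2 * k + 1)
            rw [if_neg hmod, hdiv, ← hk] at h6
            exact absurd h6 (hsepp k)
        · refine ⟨a0, ?_⟩
          intro w hw
          have hwCL : w ∈ CL := hw
          by_contra h
          exact hne ⟨w, hwCL, h⟩
      obtain ⟨a, ha⟩ := hAex
      refine ⟨fun m w => min 1 ((m + 1 : ℝ) *
        ∑ j ∈ Finset.range (m + 1), |f (a j) w - f (a j) z|), ?_, ?_, ?_, ?_⟩
      · intro m
        exact continuous_const.min (continuous_const.mul
          (continuous_finset_sum _ fun j _ => ((hfc _).sub continuous_const).abs))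
      · intro m w
        apply min_le_min le_rfl
        apply mul_le_mul (by push_cast; linarith)
          (Finset.sum_le_sum_of_subset_of_nonneg
            (Finset.range_subset_range.mpr (by omega)) (fun j _ _ => abs_nonneg _))
          (Finset.sum_nonneg fun j _ => abs_nonneg _) (by positivity)
      · intro m w
        constructor
        · apply le_min (by norm_num)
          positivity
        · exact min_le_left _ _
      · intro _
        refine ⟨?_, ?_, ?_⟩
        · intro m
          simp
        · intro w hw
          have hex : ∃ j, f (a j) w ≠ f (a j) z := by
            by_contra hc
            push_neg at hc
            exact hw (ha w hc)
          obtain ⟨j0, hj0⟩ := hex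
          have hd : 0 < |f (a j0) w - f (a j0) z| := abs_pos.mpr (sub_ne_zero.mpr hj0)
          refine ⟨j0 + 1 + ⌈|f (a j0) w - f (a j0) z|⁻¹⌉₊, ?_⟩
          intro m hm
          have h1 : |f (a j0) w - f (a j0) z| ≤
              ∑ j ∈ Finset.range (m + 1), |f (a j) w - f (a j) z| := by
            apply Finset.single_le_sum (f := fun j => |f (a j) w - f (a j) z|)
              (fun j _ => abs_nonneg _)
            simp only [Finset.mem_range]
            omega
          have h2 : (|f (a j0) w - f (a j0) z|)⁻¹ ≤ (⌈(|f (a j0) w - f (a j0) z|)⁻¹⌉₊ : ℝ) :=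
            Nat.le_ceil _
          have h3 : (|f (a j0) w - f (a j0) z|)⁻¹ < (m + 1 : ℝ) := by
            have : (⌈(|f (a j0) w - f (a j0) z|)⁻¹⌉₊ : ℝ) ≤ (m : ℝ) := by
              exact_mod_cast le_trans (by omega : ⌈(|f (a j0) w - f (a j0) z|)⁻¹⌉₊ ≤ m) le_rfl
            linarith
          have h4 : 1 < (m + 1 : ℝ) * |f (a j0) w - f (a j0) z| := by
            rw [inv_lt_iff_one_lt_mul₀ hd] at h3
            linarith [h3]
          apply min_eq_left
          calc (1:ℝ) ≤ (m + 1 : ℝ) * |f (a j0) w - f (a j0) z| := h4.le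
          _ ≤ (m + 1 : ℝ) * ∑ j ∈ Finset.range (m + 1), |f (a j) w - f (a j) z| := by
              apply mul_le_mul_of_nonneg_left h1 (by positivity)
        · intro w hw
          apply ha
          intro j
          have h1 := hw j
          have h2 : (0:ℝ) ≤ (j + 1 : ℝ) * ∑ i ∈ Finset.range (j + 1), |f (a i) w - f (a i) z| := by
            positivity
          have h3 : (j + 1 : ℝ) * ∑ i ∈ Finset.range (j + 1), |f (a i) w - f (a i) z| = 0 := by
            rcases lt_or_eq_of_le h2 with hlt | he
            · exfalso
              have h6 : (0:ℝ) < min 1 ((j + 1 : ℝ) *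
                  ∑ i ∈ Finset.range (j + 1), |f (a i) w - f (a i) z|) :=
                lt_min one_pos hlt
              exact (ne_of_gt h6) h1
            · exact he.symm
          have h4 : ∑ i ∈ Finset.range (j + 1), |f (a i) w - f (a i) z| = 0 := by
            rcases mul_eq_zero.mp h3 with h | h
            · exact absurd h (by positivity)
            · exact h
          have h5 := (Finset.sum_eq_zero_iff_of_nonneg (fun i _ => abs_nonneg
            (f (a i) w - f (a i) z))).mp h4 j (by simp)
          have := abs_eq_zero.mp h5
          linarith [this]
    · refine ⟨fun _ _ => 1, fun m => continuous_const, fun m w => le_rfl,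
        fun m w => ⟨by norm_num, le_rfl⟩, fun h => absurd h hz⟩
  choose KZ hKZc hKZm hKZb hKZx using hKZex
  -- ### product kill functions
  set Kb : Γ → ℕ → ℕ → K → ℝ := fun γ n m w =>
    match m with
    | 0 => 0
    | Nat.succ k => ∏ z ∈ XF γ n, KZ z (k + 1) w with hKbdef
  have hKbc : ∀ γ n m, Continuous (Kb γ n m) := by
    intro γ n m
    rcases m with _ | k
    · simp only [hKbdef]
      exact continuous_const
    · simp only [hKbdef]
      exact continuous_finset_prod _ fun z _ => hKZc z (k + 1)
  have hKb0 : ∀ γ n m w, 0 ≤ Kb γ n m w := by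
    intro γ n m w
    rcases m with _ | k
    · simp [hKbdef]
    · simp only [hKbdef]
      exact Finset.prod_nonneg fun z _ => (hKZb z (k + 1) w).1
  have hKb1 : ∀ γ n m w, Kb γ n m w ≤ 1 := by
    intro γ n m w
    rcases m with _ | k
    · simp [hKbdef]
    · simp only [hKbdef]
      exact Finset.prod_le_one (fun z _ => (hKZb z (k + 1) w).1)
        (fun z _ => (hKZb z (k + 1) w).2)
  have hKbm : ∀ γ n m w, Kb γ n m w ≤ Kb γ n (m + 1) w := by
    intro γ n m w
    rcases m with _ | k
    · simp only [hKbdef]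
      exact Finset.prod_nonneg fun z _ => (hKZb z 1 w).1
    · simp only [hKbdef]
      exact Finset.prod_le_prod (fun z _ => (hKZb z (k + 1) w).1)
        (fun z _ => hKZm z (k + 1) w)
  have hKbzero : ∀ γ n m w, w ∈ Xs γ n → Kb γ n m w = 0 := by
    intro γ n m w hw
    rcases m with _ | k
    · simp [hKbdef]
    · simp only [hKbdef]
      exact Finset.prod_eq_zero ((hXF γ n w).mpr hw) ((hKZx w ⟨γ, n, hw⟩).1 (k + 1))
  have hKbone : ∀ γ n w, w ∉ Xs γ n → ∃ M, ∀ m, M ≤ m → Kb γ n m w = 1 := by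
    intro γ n w hw
    have hz : ∀ z ∈ XF γ n, ∃ M, ∀ m, M ≤ m → KZ z m w = 1 := by
      intro z hzX
      have hzXs := (hXF γ n z).mp hzX
      have hne : w ≠ z := by
        rintro rfl
        exact hw hzXs
      exact (hKZx z ⟨γ, n, hzXs⟩).2.1 w hne
    choose M hM using hz
    refine ⟨(XF γ n).attach.sup (fun z => M z.1 z.2) + 1, ?_⟩
    intro m hm
    rcases m with _ | k
    · omega
    · simp only [hKbdef]
      apply Finset.prod_eq_one
      intro z hzX
      apply hM z hzX
      have h7 : M z hzX ≤ (XF γ n).attach.sup (fun q => M q.1 q.2) :=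
        Finset.le_sup (f := fun q : {x // x ∈ XF γ n} => M q.1 q.2)
          (Finset.mem_attach _ ⟨z, hzX⟩)
      omega
  -- ### band coordinates
  set tb : Γ → ℕ → K → ℝ := fun γ n w => tent n (f γ w) with htb
  set band : Γ → ℕ → ℕ → K → ℝ := fun γ n m w =>
    min (tb γ n w) (Kb γ n (m + 1) w) - min (tb γ n w) (Kb γ n m w) with hband
  have hbandc : ∀ γ n m, Continuous (band γ n m) := by
    intro γ n m
    simp only [hband, htb]
    exact (((tent_continuous n).comp (hfc γ)).min (hKbc γ n (m + 1))).sub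
      (((tent_continuous n).comp (hfc γ)).min (hKbc γ n m))
  have hband0 : ∀ γ n m w, 0 ≤ band γ n m w := by
    intro γ n m w
    simp only [hband]
    exact sub_nonneg.mpr (min_le_min le_rfl (hKbm γ n m w))
  have hband1 : ∀ γ n m w, band γ n m w ≤ 1 := by
    intro γ n m w
    simp only [hband, htb]
    have h1 : min (tent n (f γ w)) (Kb γ n (m + 1) w) ≤ 1 :=
      le_trans (min_le_left _ _) (tent_le_one _ _)
    have h2 : 0 ≤ min (tent n (f γ w)) (Kb γ n m w) :=
      le_min (tent_nonneg _ _) (hKb0 γ n m w)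
    linarith
  have htele : ∀ γ n M w, ∑ m ∈ Finset.range M, band γ n m w
      = min (tb γ n w) (Kb γ n M w) := by
    intro γ n M w
    induction M with
    | zero =>
      simp only [Finset.range_zero, Finset.sum_empty]
      have : Kb γ n 0 w = 0 := by simp [hKbdef]
      rw [this, min_eq_right (by simp only [htb]; exact tent_nonneg _ _)]
    | succ M ih =>
      rw [Finset.sum_range_succ, ih]
      simp only [hband]
      ring
  have hpairs : ∀ (w : K) (G : Set Γ), G.Finite →
      {q : Γ × ℕ | q.1 ∈ G ∧ tent q.2 (f q.1 w) ≠ 0}.Finite := by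
    intro w G hG
    have h1 := Set.Finite.biUnion hG
      (fun γ (_ : γ ∈ G) => ((tent_support_finite (f γ w)).image (fun n => (γ, n))))
    apply Set.Finite.subset h1
    rintro ⟨γ, n⟩ ⟨hγ, hn⟩
    exact mem_biUnion hγ ⟨n, hn, rfl⟩
  have hslots : ∀ w : K, {q : Γ × ℕ | tent q.2 (f q.1 w) ≠ 0 ∧ w ∉ Xs q.1 q.2}.Finite := by
    intro w
    by_cases hwT : {γ' | f γ' w ≠ 0}.Infinite
    · apply Set.Finite.subset (hpairs w {γ | s γ w ≠ 0} (hSfin w))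
      rintro ⟨γ, n⟩ ⟨ht, hX⟩
      refine ⟨?_, ht⟩
      simp only [mem_setOf_eq]
      intro hs0
      apply hX
      have hpos : 0 < tent n (f γ w) := lt_of_le_of_ne (tent_nonneg _ _) (Ne.symm ht)
      rw [tent_pos_iff] at hpos
      obtain ⟨hp1, hp2⟩ := hpos
      have e1 : (2:ℝ) ^ (n + 3) * f γ w = 4 * (2 ^ (n + 1) * f γ w) := by ring
      have e2 : (2:ℝ) ^ n * f γ w ≤ 8 := by linarith
      have e3 : |s γ w - f γ w| = f γ w := by
        rw [hs0, zero_sub, abs_neg, abs_of_nonneg (hf0 γ w)]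
      exact ⟨hwT, by linarith, e2, by rw [e3]; linarith⟩
    · apply Set.Finite.subset (hpairs w {γ' | f γ' w ≠ 0} (Set.not_infinite.mp hwT))
      rintro ⟨γ, n⟩ ⟨ht, hX⟩
      refine ⟨?_, ht⟩
      simp only [mem_setOf_eq]
      intro hf0'
      apply ht
      have h2 : 2 ^ (n + 1) * f γ w = 0 := by rw [hf0', mul_zero]
      have : ¬(0 < tent n (f γ w)) := by
        rw [tent_pos_iff]
        rintro ⟨hp1, -⟩
        rw [h2] at hp1
        norm_num at hp1
      have h3 := tent_nonneg n (f γ w)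
      linarith [lt_of_le_of_ne h3 (Ne.symm ht)]
  have hPFband : ∀ w : K, {p : Γ × ℕ × ℕ | band p.1 p.2.1 p.2.2 w ≠ 0}.Finite := by
    intro w
    have hm : ∀ q : Γ × ℕ, w ∉ Xs q.1 q.2 → {m : ℕ | band q.1 q.2 m w ≠ 0}.Finite := by
      intro q hX
      obtain ⟨M, hM⟩ := hKbone q.1 q.2 w hX
      apply Set.Finite.subset (Set.finite_Iio M)
      intro m hmm
      simp only [mem_setOf_eq] at hmm
      simp only [mem_Iio]
      by_contra hc
      push_neg at hc
      apply hmm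
      have h1 : Kb q.1 q.2 m w = 1 := hM m hc
      have h2 : Kb q.1 q.2 (m + 1) w = 1 := hM (m + 1) (by omega)
      simp only [hband, h1, h2, sub_self]
    apply Set.Finite.subset (Set.Finite.biUnion (hslots w)
      (fun q (hq : _ ∧ _) => ((hm q hq.2).image (fun m => (q.1, q.2, m)))))
    rintro ⟨γ, n, m⟩ hp
    simp only [mem_setOf_eq] at hp
    have htp : tent n (f γ w) ≠ 0 := by
      intro h0
      apply hp
      have h1 : tb γ n w = 0 := by rw [htb]; exact h0
      simp only [hband, h1]
      rw [min_eq_left (hKb0 γ n (m + 1) w), min_eq_left (hKb0 γ n m w), sub_self]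
    have hXp : w ∉ Xs γ n := by
      intro hX
      apply hp
      have h1 := hKbzero γ n m w hX
      have h2 := hKbzero γ n (m + 1) w hX
      simp only [hband, h1, h2, sub_self]
    have hmem : ((γ, n) : Γ × ℕ) ∈ {q : Γ × ℕ | tent q.2 (f q.1 w) ≠ 0 ∧ w ∉ Xs q.1 q.2} :=
      ⟨htp, hXp⟩
    exact mem_biUnion hmem ⟨m, hp, rfl⟩
  -- ### private coordinates
  have hPrivEx : ∀ z : K, ∃ uz gz : K → ℝ,
      Continuous uz ∧ Continuous gz ∧
      (∀ w, 0 ≤ uz w ∧ uz w ≤ 1) ∧ (∀ w, 0 ≤ gz w ∧ gz w ≤ 1) ∧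
      (z ∉ XX → ∀ w, uz w = 0) ∧
      (z ∈ XX → 0 < uz z * gz z ∧
        ∃ γ n, z ∈ Xs γ n ∧
          (∀ w, gz w ≠ 0 → 1 < 2 ^ (n + 4) * f γ w ∧ 2 ^ n * f γ w < 32) ∧
          (∀ w, uz w ≠ 0 → w = z ∨ (XF γ (n + 1) ∪ XF γ (n - 2)).sup Nn < Nn w)) := by
    intro z
    by_cases hz : z ∈ XX
    · obtain ⟨γ, n, hzX⟩ := id hz
      obtain ⟨V, hVo, hzV, hV⟩ := hBprop z hzX.1 ((XF γ (n + 1) ∪ XF γ (n - 2)).sup Nn)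
      obtain ⟨u, hu0, hu1, hub⟩ := exists_continuous_zero_one_of_isClosed
        (isClosed_compl_iff.mpr hVo) (isClosed_singleton (x := z))
        (by rw [disjoint_singleton_right]; exact fun h => h hzV)
      refine ⟨⇑u, fun w => wbump n (f γ w), u.continuous,
        (wbump_continuous n).comp (hfc γ),
        fun w => ⟨(hub w).1, (hub w).2⟩,
        fun w => ⟨wbump_nonneg _ _, wbump_le_one _ _⟩, fun h => absurd hz h, fun _ => ?_⟩
      constructor
      · have h1 : u z = 1 := by
          have := hu1 (mem_singleton z)
          simpa using this
        have h2 : 0 < wbump n (f γ z) := wbump_pos_of_window n (f γ z) hzX.2.1 hzX.2.2.1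
        rw [h1, one_mul]
        exact h2
      · refine ⟨γ, n, hzX, ?_, ?_⟩
        · intro w hgw
          have h3 : 0 < wbump n (f γ w) := lt_of_le_of_ne (wbump_nonneg _ _) (Ne.symm hgw)
          rwa [wbump_pos_iff] at h3
        · intro w huw
          by_cases hwz : w = z
          · exact Or.inl hwz
          · right
            apply hV w ?_ hwz
            by_contra hwV
            apply huw
            have := hu0 (show w ∈ (Vᶜ : Set K) from hwV)
            simpa using this
    · exact ⟨fun _ => 0, fun _ => 0, continuous_const, continuous_const,
        fun w => ⟨le_rfl, by norm_num⟩, fun w => ⟨le_rfl, by norm_num⟩,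
        fun _ _ => rfl, fun h => absurd h hz⟩
  choose Uz Gz hUc hGc hUb hGb hUnot hUG using hPrivEx
  set P1 : K → K → ℝ := fun z w => Uz z w * Gz z w with hP1def
  set KZp : K → ℕ → K → ℝ := fun z m w =>
    match m with
    | 0 => 0
    | Nat.succ k => KZ z k w with hKZpdef
  set P2 : K → ℕ → K → ℝ := fun z m w => P1 z w * (KZ z m w - KZp z m w) with hP2def
  have hP1b : ∀ z w, 0 ≤ P1 z w ∧ P1 z w ≤ 1 := by
    intro z w
    simp only [hP1def]
    constructor
    · exact mul_nonneg (hUb z w).1 (hGb z w).1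
    · exact mul_le_one₀ (hUb z w).2 (hGb z w).1 (hGb z w).2
  have hdiffb : ∀ z m w, 0 ≤ KZ z m w - KZp z m w ∧ KZ z m w - KZp z m w ≤ 1 := by
    intro z m w
    rcases m with _ | k
    · have h1 : KZp z 0 w = 0 := by simp [hKZpdef]
      rw [h1, sub_zero]
      exact hKZb z 0 w
    · have h1 : KZp z (k + 1) w = KZ z k w := by simp [hKZpdef]
      rw [h1]
      constructor
      · exact sub_nonneg.mpr (hKZm z k w)
      · have := (hKZb z (k + 1) w).2
        have := (hKZb z k w).1
        linarith
  have hP2b : ∀ z m w, 0 ≤ P2 z m w ∧ P2 z m w ≤ 1 := by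
    intro z m w
    simp only [hP2def]
    constructor
    · exact mul_nonneg (hP1b z w).1 (hdiffb z m w).1
    · exact mul_le_one₀ (hP1b z w).2 (hdiffb z m w).1 (hdiffb z m w).2
  have hwpairs : ∀ (w : K) (G : Set Γ), G.Finite →
      {q : Γ × ℕ | q.1 ∈ G ∧ wbump q.2 (f q.1 w) ≠ 0 ∧ 0 < f q.1 w}.Finite := by
    intro w G hG
    have hfin : ∀ γ : Γ, ({n | wbump n (f γ w) ≠ 0 ∧ 0 < f γ w}).Finite := by
      intro γ
      by_cases hfγ : 0 < f γ w
      · exact (wbump_support_finite hfγ).subset (fun n hn => hn.1)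
      · convert Set.finite_empty
        ext n
        simp only [mem_setOf_eq, mem_empty_iff_false, iff_false, not_and]
        exact fun _ => hfγ
    have h1 := Set.Finite.biUnion hG
      (fun γ (_ : γ ∈ G) => ((hfin γ).image (fun n => (γ, n))))
    apply Set.Finite.subset h1
    rintro ⟨γ, n⟩ ⟨hγ, hn⟩
    exact mem_biUnion hγ ⟨n, hn, rfl⟩
  -- membership of `w` in an X set produced by the covering lemma
  have hXcover : ∀ (w : K) (γ : Γ) (n : ℕ), {γ' | f γ' w ≠ 0}.Infinite → s γ w = 0 →
      1 < 2 ^ (n + 4) * f γ w → 2 ^ n * f γ w < 32 → 0 < f γ w →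
      w ∈ Xs γ (n + 1) ∨ w ∈ Xs γ (n - 2) := by
    intro w γ n hwT hs0 hw1 hw2 hfpos
    have e3 : |s γ w - f γ w| = f γ w := by
      rw [hs0, zero_sub, abs_neg, abs_of_nonneg (hf0 γ w)]
    rcases wbump_cover hfpos (hf1 γ w) hw1 hw2 with ⟨hc1, hc2⟩ | ⟨hc1, hc2⟩
    · exact Or.inl ⟨hwT, hc1, hc2, by rw [e3]; exact hc1⟩
    · exact Or.inr ⟨hwT, hc1, hc2, by rw [e3]; exact hc1⟩
  have hPF1 : ∀ w : K, {z | P1 z w ≠ 0}.Finite := by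
    intro w
    -- every active z is either w itself or lies in an X set indexed by an active wbump pair
    have hkey2 : ∀ z, P1 z w ≠ 0 → z ≠ w → ∃ γ n, z ∈ Xs γ n ∧
        wbump n (f γ w) ≠ 0 ∧ 0 < f γ w ∧
        ({γ' | f γ' w ≠ 0}.Infinite → s γ w ≠ 0) := by
      intro z hP hzw
      have hzXX : z ∈ XX := by
        by_contra hzn
        apply hP
        simp only [hP1def]
        rw [hUnot z hzn w, zero_mul]
      obtain ⟨-, γ', n', hzX', hgsup, husup⟩ := hUG z hzXX
      have hU0 : Uz z w ≠ 0 := by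
        intro h0
        apply hP
        simp only [hP1def]
        rw [h0, zero_mul]
      have hG0 : Gz z w ≠ 0 := by
        intro h0
        apply hP
        simp only [hP1def]
        rw [h0, mul_zero]
      obtain ⟨hw1, hw2⟩ := hgsup w hG0
      have hfpos : 0 < f γ' w := by
        by_contra hc
        push_neg at hc
        nlinarith [two_pos (n' + 4)]
      have hwb : wbump n' (f γ' w) ≠ 0 :=
        ne_of_gt ((wbump_pos_iff n' (f γ' w)).mpr ⟨hw1, hw2⟩)
      refine ⟨γ', n', hzX', hwb, hfpos, ?_⟩
      intro hwT hs0
      rcases husup w hU0 with h | h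
      · exact hzw (h ▸ rfl)
      · rcases hXcover w γ' n' hwT hs0 hw1 hw2 hfpos with hc | hc
        · have : Nn w ≤ (XF γ' (n' + 1) ∪ XF γ' (n' - 2)).sup Nn :=
            Finset.le_sup (Finset.mem_union_left _ ((hXF _ _ w).mpr hc))
          omega
        · have : Nn w ≤ (XF γ' (n' + 1) ∪ XF γ' (n' - 2)).sup Nn :=
            Finset.le_sup (Finset.mem_union_right _ ((hXF _ _ w).mpr hc))
          omega
    by_cases hwT : {γ' | f γ' w ≠ 0}.Infinite
    · have hbig := Set.Finite.biUnion
        (hwpairs w {γ | s γ w ≠ 0} (hSfin w)) (fun q _ => hXfin q.1 q.2)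
      apply Set.Finite.subset (hbig.insert w)
      intro z hz
      rcases eq_or_ne z w with h | h
      · exact Or.inl h
      · obtain ⟨γ, n, hzX, hwb, hfpos, hss⟩ := hkey2 z hz h
        right
        have hmem : ((γ, n) : Γ × ℕ) ∈
            {q : Γ × ℕ | q.1 ∈ {γ | s γ w ≠ 0} ∧ wbump q.2 (f q.1 w) ≠ 0 ∧ 0 < f q.1 w} :=
          ⟨hss hwT, hwb, hfpos⟩
        exact mem_biUnion hmem hzX
    · have hbig := Set.Finite.biUnion
        (hwpairs w {γ' | f γ' w ≠ 0} (Set.not_infinite.mp hwT)) (fun q _ => hXfin q.1 q.2)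
      apply Set.Finite.subset (hbig.insert w)
      intro z hz
      rcases eq_or_ne z w with h | h
      · exact Or.inl h
      · obtain ⟨γ, n, hzX, hwb, hfpos, -⟩ := hkey2 z hz h
        right
        have hmem : ((γ, n) : Γ × ℕ) ∈
            {q : Γ × ℕ | q.1 ∈ {γ' | f γ' w ≠ 0} ∧ wbump q.2 (f q.1 w) ≠ 0 ∧ 0 < f q.1 w} :=
          ⟨ne_of_gt hfpos, hwb, hfpos⟩
        exact mem_biUnion hmem hzX
  have hPF2 : ∀ w : K, {q : K × ℕ | P2 q.1 q.2 w ≠ 0}.Finite := by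
    intro w
    have hmfin : ∀ z, P1 z w ≠ 0 → {m : ℕ | P2 z m w ≠ 0}.Finite := by
      intro z hP
      have hzXX : z ∈ XX := by
        by_contra hzn
        apply hP
        simp only [hP1def]
        rw [hUnot z hzn w, zero_mul]
      rcases eq_or_ne w z with hwz | hwz
      · convert Set.finite_empty
        ext m
        simp only [mem_setOf_eq, mem_empty_iff_false, iff_false, not_not]
        simp only [hP2def]
        have h1 : KZ z m w = 0 := by rw [hwz]; exact (hKZx z hzXX).1 m
        have h2 : KZp z m w = 0 := by
          rcases m with _ | k
          · simp [hKZpdef]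
          · simp only [hKZpdef]
            rw [hwz]
            exact (hKZx z hzXX).1 k
        rw [h1, h2, sub_zero, mul_zero]
      · obtain ⟨M, hM⟩ := (hKZx z hzXX).2.1 w hwz
        apply Set.Finite.subset (Set.finite_Iio (M + 1))
        intro m hm
        simp only [mem_setOf_eq] at hm
        simp only [mem_Iio]
        by_contra hc
        push_neg at hc
        apply hm
        simp only [hP2def]
        rcases m with _ | k
        · omega
        · have h1 : KZ z (k + 1) w = 1 := hM (k + 1) (by omega)
          have h2 : KZp z (k + 1) w = KZ z k w := by simp [hKZpdef]
          have h3 : KZ z k w = 1 := hM k (by omega)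
          rw [h1, h2, h3, sub_self, mul_zero]
    have hbig := Set.Finite.biUnion (hPF1 w)
      (fun z (hz : P1 z w ≠ 0) => ((hmfin z hz).image (fun m => (z, m))))
    apply Set.Finite.subset hbig
    rintro ⟨z, m⟩ hq
    simp only [mem_setOf_eq] at hq
    have hP : P1 z w ≠ 0 := by
      intro h0
      apply hq
      simp only [hP2def, h0, zero_mul]
    exact mem_biUnion hP ⟨m, hq, rfl⟩
  -- ### injectivity
  have hkey : ∀ x y : K, (∀ z, P1 z x = P1 z y) → (∀ z m, P2 z m x = P2 z m y) →
      x ∈ XX → y = x := by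
    intro x y h1 h2 hx
    obtain ⟨hpos, γ, n, hxX, hgsup, husup⟩ := hUG x hx
    have hP1xx : 0 < P1 x x := by simp only [hP1def]; exact hpos
    have hP1ypos : 0 < P1 x y := by rw [← h1 x]; exact hP1xx
    have hz : ∀ m, KZ x m y - KZp x m y = 0 := by
      intro m
      have h4 : P2 x m x = 0 := by
        simp only [hP2def]
        have hd : KZ x m x - KZp x m x = 0 := by
          have ha := (hKZx x hx).1 m
          rcases m with _ | k
          · simp only [hKZpdef]
            rw [ha, sub_zero]
          · simp only [hKZpdef]
            rw [ha, (hKZx x hx).1 k, sub_zero]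
        rw [hd, mul_zero]
      have h5 : P2 x m y = 0 := by rw [← h2 x m]; exact h4
      simp only [hP2def] at h5
      rcases mul_eq_zero.mp h5 with h | h
      · exact absurd h (ne_of_gt hP1ypos)
      · exact h
    have hz0 : ∀ m, KZ x m y = 0 := by
      intro m
      induction m with
      | zero =>
        have h6 := hz 0
        simp only [hKZpdef] at h6
        linarith
      | succ k ih =>
        have h6 := hz (k + 1)
        simp only [hKZpdef] at h6
        linarith
    exact (hKZx x hx).2.2 y hz0
  have hinj : ∀ x y : K, (∀ γ n m, band γ n m x = band γ n m y) →
      (∀ z, P1 z x = P1 z y) → (∀ z m, P2 z m x = P2 z m y) → x = y := by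
    intro x y hb h1 h2
    by_cases hx : x ∈ XX
    · exact (hkey x y h1 h2 hx).symm
    by_cases hy : y ∈ XX
    · exact hkey y x (fun z => (h1 z).symm) (fun z m => (h2 z m).symm) hy
    apply hfinj
    intro γ
    apply tent_inj (hf0 γ x) (hf1 γ x) (hf0 γ y) (hf1 γ y)
    intro n
    have hxX : x ∉ Xs γ n := fun h => hx ⟨γ, n, h⟩
    have hyX : y ∉ Xs γ n := fun h => hy ⟨γ, n, h⟩
    obtain ⟨Mx, hMx⟩ := hKbone γ n x hxX
    obtain ⟨My, hMy⟩ := hKbone γ n y hyX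
    have e1 : ∑ m ∈ Finset.range (max Mx My), band γ n m x
        = ∑ m ∈ Finset.range (max Mx My), band γ n m y :=
      Finset.sum_congr rfl (fun m _ => hb γ n m)
    rw [htele, htele] at e1
    rw [hMx (max Mx My) (le_max_left _ _), hMy (max Mx My) (le_max_right _ _)] at e1
    rw [min_eq_left (by simp only [htb]; exact tent_le_one _ _),
      min_eq_left (by simp only [htb]; exact tent_le_one _ _)] at e1
    simpa only [htb] using e1
  -- ### assembly
  set Λ : Type u := (Γ × ℕ × ℕ) ⊕ (K ⊕ K × ℕ) with hΛ
  set Φ : Λ → K → ℝ := fun l w =>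
    match l with
    | Sum.inl (γ, n, m) => band γ n m w
    | Sum.inr (Sum.inl z) => P1 z w
    | Sum.inr (Sum.inr (z, m)) => P2 z m w with hΦdef
  have hΦc : ∀ l, Continuous (Φ l) := by
    intro l
    rcases l with ⟨γ, n, m⟩ | (z | ⟨z, m⟩) <;> simp only [hΦdef]
    · exact hbandc γ n m
    · simp only [hP1def]
      exact (hUc z).mul (hGc z)
    · simp only [hP2def, hP1def]
      have hKZpc : Continuous (KZp z m) := by
        rcases m with _ | k
        · simp only [hKZpdef]
          exact continuous_const
        · simp only [hKZpdef]
          exact hKZc z k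
      exact ((hUc z).mul (hGc z)).mul ((hKZc z m).sub hKZpc)
  have hΦb : ∀ l w, 0 ≤ Φ l w ∧ Φ l w ≤ 1 := by
    intro l w
    rcases l with ⟨γ, n, m⟩ | (z | ⟨z, m⟩) <;> simp only [hΦdef]
    · exact ⟨hband0 γ n m w, hband1 γ n m w⟩
    · exact hP1b z w
    · exact hP2b z m w
  have hΦpf : ∀ w : K, {l : Λ | Φ l w ≠ 0}.Finite := by
    intro w
    have hfin : (((fun p => (Sum.inl p : Λ)) '' {p : Γ × ℕ × ℕ | band p.1 p.2.1 p.2.2 w ≠ 0}) ∪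
        (((fun z => (Sum.inr (Sum.inl z) : Λ)) '' {z : K | P1 z w ≠ 0}) ∪
        ((fun q => (Sum.inr (Sum.inr q) : Λ)) '' {q : K × ℕ | P2 q.1 q.2 w ≠ 0}))).Finite :=
      Set.Finite.union ((hPFband w).image _)
        (Set.Finite.union ((hPF1 w).image _) ((hPF2 w).image _))
    apply Set.Finite.subset hfin
    intro l hl
    rcases l with ⟨γ, n, m⟩ | (z | ⟨z, m⟩)
    · exact Or.inl ⟨(γ, n, m), hl, rfl⟩
    · exact Or.inr (Or.inl ⟨z, hl, rfl⟩)
    · exact Or.inr (Or.inr ⟨(z, m), hl, rfl⟩)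
  have hΦinj : ∀ x y : K, (∀ l, Φ l x = Φ l y) → x = y := by
    intro x y h
    apply hinj x y
    · intro γ n m
      exact h (Sum.inl (γ, n, m))
    · intro z
      exact h (Sum.inr (Sum.inl z))
    · intro z m
      exact h (Sum.inr (Sum.inr (z, m)))
  refine ⟨Λ, fun w l => ⟨Φ l w, (hΦb l w).1, (hΦb l w).2⟩, ?_, ?_⟩
  · have hc : Continuous (fun (w : K) (l : Λ) =>
        (⟨Φ l w, (hΦb l w).1, (hΦb l w).2⟩ : unitInterval)) :=
      continuous_pi fun l => Continuous.subtype_mk (hΦc l) _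
    have hi : Function.Injective (fun (w : K) (l : Λ) =>
        (⟨Φ l w, (hΦb l w).1, (hΦb l w).2⟩ : unitInterval)) := by
      intro x y hxy
      exact hΦinj x y fun l => congrArg Subtype.val (congrFun hxy l)
    exact (hc.isClosedEmbedding hi).isEmbedding
  · intro w
    have : {l : Λ | (⟨Φ l w, (hΦb l w).1, (hΦb l w).2⟩ : unitInterval) ≠ 0}
        = {l : Λ | Φ l w ≠ 0} := by
      ext l
      simp [Subtype.ext_iff]
    rw [this]
    exact hΦpf w


end

theorem omegaCorson_of_omegaValdivia_AD (K : Type u) [TopologicalSpace K]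
    [CompactSpace K] [T2Space K]
    (hyp : @OmegaValdivia (K × Bool) (adTopology K)) : OmegaCorson K := by
  classical
  letI := adTopology K
  obtain ⟨Γ, h, hemb, hdense⟩ := hyp
  set f : Γ → K → ℝ := fun γ w => ((h (w, false) γ : ℝ)) with hfdef
  set s : Γ → K → ℝ := fun γ w => ((h (w, true) γ : ℝ)) with hsdef
  have hcontfalse : Continuous (fun w : K => h (w, false)) :=
    hemb.continuous.comp adContinuous_false
  apply master_omegaCorson f s
  · intro γ w
    exact (h (w, false) γ).2.1
  · intro γ w
    exact (h (w, false) γ).2.2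
  · intro γ
    exact continuous_subtype_val.comp ((continuous_apply γ).comp hcontfalse)
  · intro x y hxy
    have h1 : h (x, false) = h (y, false) := by
      funext γ
      exact Subtype.ext (hxy γ)
    have := hemb.injective h1
    exact congrArg Prod.fst this
  · -- finite supports of s: the true points are isolated and land in the dense σ-part
    intro w
    have hopen : IsOpen[adTopology K] {((w, true) : K × Bool)} := by
      intro x hx
      exfalso
      simp only [mem_singleton_iff, Prod.mk.injEq] at hx
      exact Bool.false_ne_true hx.2
    obtain ⟨W, hWo, hWpre⟩ := (Topology.IsInducing.isOpen_iff hemb.isInducing).mp hopen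
    have hmemW : h (w, true) ∈ W := by
      have : ((w, true) : K × Bool) ∈ h ⁻¹' W := by
        rw [hWpre]
        rfl
      exact this
    have hcl : h (w, true) ∈ closure (Set.range h ∩ {x | {γ | x γ ≠ 0}.Finite}) :=
      hdense (mem_range_self _)
    obtain ⟨v, hvW, hvr, hvσ⟩ := mem_closure_iff.mp hcl W hWo hmemW
    obtain ⟨p, hp⟩ := hvr
    have hpw : p = (w, true) := by
      have : p ∈ h ⁻¹' W := by
        rw [mem_preimage, hp]
        exact hvW
      rwa [hWpre, mem_singleton_iff] at this
    have hv : v = h (w, true) := by rw [← hp, hpw]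
    rw [hv] at hvσ
    apply Set.Finite.subset hvσ
    intro γ hγ
    simp only [mem_setOf_eq] at hγ ⊢
    intro h0
    apply hγ
    rw [hsdef]
    simp only [h0]
    rfl
  · -- the approximation property hB
    intro z A ε hε
    set W : Set (Γ → unitInterval) := ⋂ γ ∈ A, {v | |(v γ : ℝ) - f γ z| < ε} with hWdef
    have hWo : IsOpen W := by
      apply isOpen_biInter_finset
      intro γ _
      have hc : Continuous (fun v : Γ → unitInterval => |(v γ : ℝ) - f γ z|) := by
        apply Continuous.abs
        exact (continuous_subtype_val.comp (continuous_apply γ)).sub continuous_const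
      exact isOpen_lt hc continuous_const
    have hmemW : h (z, false) ∈ W := by
      rw [hWdef]
      simp only [mem_iInter, mem_setOf_eq]
      intro γ _
      rw [hfdef]
      simp only [sub_self, abs_zero]
      exact hε
    have hpre : IsOpen[adTopology K] (h ⁻¹' W) := hWo.preimage hemb.continuous
    obtain ⟨U, hUo, hzU, hUsub⟩ := hpre z (by rw [mem_preimage]; exact hmemW)
    refine ⟨U, hUo, hzU, ?_⟩
    intro y hyU
    constructor
    · intro γ hγA
      have : ((y, false) : K × Bool) ∈ h ⁻¹' W := by
        apply hUsub
        refine ⟨hyU, ?_⟩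
        simp
      rw [mem_preimage, hWdef] at this
      simp only [mem_iInter, mem_setOf_eq] at this
      exact this γ hγA
    · intro hyz γ hγA
      have : ((y, true) : K × Bool) ∈ h ⁻¹' W := by
        apply hUsub
        refine ⟨hyU, ?_⟩
        simp only [ne_eq, Prod.mk.injEq, not_and]
        intro hcon
        exact absurd hcon hyz
      rw [mem_preimage, hWdef] at this
      simp only [mem_iInter, mem_setOf_eq] at this
      exact this γ hγA


/-- for a compact Hausdorff space `K`, `K` is ω-Corson iff
`AD(K)` is ω-Corson iff `AD(K)` is ω-Valdivia. -/
theorem omegaCorson_AD_characterization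
    (K : Type u) [TopologicalSpace K] [CompactSpace K] [T2Space K] :
    (OmegaCorson K ↔ @OmegaCorson (K × Bool) (adTopology K)) ∧
    (OmegaCorson K ↔ @OmegaValdivia (K × Bool) (adTopology K)) := by
  constructor
  · exact ⟨omegaCorson_AD_of_omegaCorson K, omegaCorson_of_AD K⟩
  · constructor
    · intro hc
      exact omegaValdivia_of_omegaCorson_AD K (omegaCorson_AD_of_omegaCorson K hc)
    · exact omegaCorson_of_omegaValdivia_AD K
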